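/- Let α, γ be real numbers with α > 0 and γ > 0, let κ ≥ 0 and β ≥ 0 satisfy β(α+γ) < 4, and define Δ(p) = α − κ − p(α+γ) and f(p) = 1/(1 + exp(β·Δ(p))). Then f has exactly one fixed point in [0,1]: if p, q ∈ [0,1] satisfy f(p) = p and f(q) = q, then p = q, and such a fixed point exists. -/

import Mathlib

/-- Under the contraction condition `β(α+γ) < 4`, the logit response map has
exactly one fixed point in `[0,1]`. -/
theorem qre_sb_unique
    (α γ κ β : ℝ) (hα : 0 < α) (hγ : 0 < γ) (hκ : 0 ≤ κ) (hβ : 0 ≤ β)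
    (hcontr : β * (α + γ) < 4)
    (Δ f : ℝ → ℝ)
    (hΔ : ∀ p, Δ p = α - κ - p * (α + γ))
    (hf : ∀ p, f p = 1 / (1 + Real.exp (β * Δ p))) :
    (∀ p ∈ Set.Icc (0:ℝ) 1, ∀ q ∈ Set.Icc (0:ℝ) 1,
        f p = p → f q = q → p = q) ∧
      ∃ p ∈ Set.Icc (0:ℝ) 1, f p = p := by
  have hfunext : f = fun p => 1 / (1 + Real.exp (β * Δ p)) := funext hf
  set s : ℝ := β * (α + γ) with hs_def
  have hs0 : 0 ≤ s := mul_nonneg hβ (by linarith)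
  have hpos : ∀ p, 0 < 1 + Real.exp (β * Δ p) := fun p => by positivity
  -- derivative of f
  have hderiv : ∀ p : ℝ, HasDerivAt f
      (s * Real.exp (β * Δ p) / (1 + Real.exp (β * Δ p))^2) p := by
    intro p
    have hu : HasDerivAt (fun q => β * Δ q) (-s) p := by
      have : (fun q => β * Δ q) = fun q => β * (α - κ) - s * q := by
        funext q; rw [hΔ]; ring
      rw [this]
      simpa using ((hasDerivAt_id p).const_mul s).const_sub (β * (α - κ))
    have hexp : HasDerivAt (fun q => 1 + Real.exp (β * Δ q))
        (Real.exp (β * Δ p) * (-s)) p := by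
      simpa using ((Real.hasDerivAt_exp (β * Δ p)).comp p hu).const_add 1
    have hinv : HasDerivAt (fun q => (1 + Real.exp (β * Δ q))⁻¹)
        (-(Real.exp (β * Δ p) * -s) / (1 + Real.exp (β * Δ p)) ^ 2) p := hexp.inv (ne_of_gt (hpos p))
    rw [hfunext]
    simp only [one_div]
    convert hinv using 1
    ring
  have hcont : Continuous f := by
    rw [continuous_iff_continuousAt]
    exact fun p => (hderiv p).continuousAt
  -- Lipschitz bound
  have hlip : ∀ p q : ℝ, |f p - f q| ≤ s / 4 * |p - q| := by
    intro p q
    have := Convex.norm_image_sub_le_of_norm_hasDerivWithin_le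
      (f := f) (C := s / 4) (s := Set.univ)
      (f' := fun x => s * Real.exp (β * Δ x) / (1 + Real.exp (β * Δ x))^2)
      (fun x _ => (hderiv x).hasDerivWithinAt)
      (fun x _ => by
        have he : (0:ℝ) < Real.exp (β * Δ x) := Real.exp_pos _
        have hsq : 4 * Real.exp (β * Δ x) ≤ (1 + Real.exp (β * Δ x))^2 := by
          nlinarith [sq_nonneg (1 - Real.exp (β * Δ x))]
        have h1 : s * Real.exp (β * Δ x) / (1 + Real.exp (β * Δ x))^2 ≤ s / 4 := by
          rw [div_le_div_iff₀ (by positivity) (by norm_num)]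
          nlinarith
        have h2 : 0 ≤ s * Real.exp (β * Δ x) / (1 + Real.exp (β * Δ x))^2 := by
          positivity
        rw [Real.norm_eq_abs, abs_of_nonneg h2]; exact h1)
      convex_univ (Set.mem_univ q) (Set.mem_univ p)
    simpa [Real.norm_eq_abs] using this
  constructor
  · intro p _ q _ hp hq
    have h := hlip p q
    rw [hp, hq] at h
    have hs4 : s / 4 < 1 := by linarith
    rcases abs_nonneg (p - q) |>.lt_or_eq with h0 | h0
    · exfalso; nlinarith
    · have : p - q = 0 := abs_eq_zero.mp h0.symm
      linarith
  · -- existence via IVT on g = f - p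
    have hg : ContinuousOn (fun p => f p - p) (Set.Icc (0:ℝ) 1) :=
      (hcont.sub continuous_id).continuousOn
    have hf0 : 0 < f 0 := by rw [hf]; positivity
    have hf1 : f 1 < 1 := by
      rw [hf]
      rw [div_lt_one (hpos 1)]
      linarith [Real.exp_pos (β * Δ 1)]
    have hmem : (0:ℝ) ∈ Set.Icc ((fun p => f p - p) 1) ((fun p => f p - p) 0) := by
      constructor <;> simp <;> linarith
    have := intermediate_value_Icc' (by norm_num : (0:ℝ) ≤ 1) hg hmem
    obtain ⟨c, hc, hc0⟩ := this
    refine ⟨c, hc, ?_⟩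
    have hc0' : f c - c = 0 := hc0
    linarith
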